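/- Let α > 0 and e₀, e₁, e₂, e₃ ∈ ℝ with e₁ > 0, and set ν = (e₂ − (α²/2)e₀)/e₁. Then the inequality e₃ − ν·e₂ + (ν²/2)·e₁ − (ν³/6)·e₀ ≤ (1/6)·(α² + ν²)·(e₁ − ν·e₀) holds if and only if α²·(e₁² − 2e₀e₂) + 4e₂² − 6e₁e₃ ≥ 0. -/

import Mathlib

/-- algebraic equivalence in the proof of Theorem 4.2 of the paper.
For `α > 0`, `e₁ > 0` and `ν = (e₂ − (α²/2)e₀)/e₁`, the inequality
`e₃ − ν·e₂ + (ν²/2)·e₁ − (ν³/6)·e₀ ≤ (1/6)·(α² + ν²)·(e₁ − ν·e₀)`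
holds iff `α²·(e₁² − 2e₀e₂) + 4e₂² − 6e₁e₃ ≥ 0`. -/
theorem stmt_11 (α e₀ e₁ e₂ e₃ ν : ℝ) (hα : 0 < α) (he₁ : 0 < e₁)
    (hν : ν = (e₂ - α ^ 2 / 2 * e₀) / e₁) :
    (e₃ - ν * e₂ + ν ^ 2 / 2 * e₁ - ν ^ 3 / 6 * e₀
        ≤ 1 / 6 * (α ^ 2 + ν ^ 2) * (e₁ - ν * e₀)) ↔
      0 ≤ α ^ 2 * (e₁ ^ 2 - 2 * e₀ * e₂) + 4 * e₂ ^ 2 - 6 * e₁ * e₃ := by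
  have hν' : ν * e₁ = e₂ - α ^ 2 / 2 * e₀ := by
    rw [hν]; field_simp
  have key : α ^ 2 * (e₁ ^ 2 - 2 * e₀ * e₂) + 4 * e₂ ^ 2 - 6 * e₁ * e₃
      = 6 * e₁ * (1 / 6 * (α ^ 2 + ν ^ 2) * (e₁ - ν * e₀)
        - (e₃ - ν * e₂ + ν ^ 2 / 2 * e₁ - ν ^ 3 / 6 * e₀)) := by
    have h2 : e₂ = ν * e₁ + α ^ 2 / 2 * e₀ := by linarith
    subst h2; ring
  rw [key]
  constructor
  · intro h
    have : 0 ≤ 1 / 6 * (α ^ 2 + ν ^ 2) * (e₁ - ν * e₀)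
        - (e₃ - ν * e₂ + ν ^ 2 / 2 * e₁ - ν ^ 3 / 6 * e₀) := by linarith
    exact mul_nonneg (by linarith) this
  · intro h
    nlinarith [mul_pos he₁ he₁]
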